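/- Let τ, σ be nonzero reals, u > 0, B, κ ∈ ℂ with |B|² ≠ u² and κ ≠ 0, and suppose ξ ∈ ℂ satisfies (iτB/u)ξ + iτ·conj(ξ) + κ|ξ|² = 0 and (iσB/u)ξ + iσ·conj(ξ) + κ = 0. Then (conj(κ) + κ·conj(B)/u)·(κ + conj(κ)·B/u) = τσ·(1 − |B|²/u²)². -/

import Mathlib

open Complex

theorem stmt_8 (τ σ : ℝ) (hτ : τ ≠ 0) (hσ : σ ≠ 0) (u : ℝ) (hu : 0 < u)
    (B κ ξ : ℂ) (hκ : κ ≠ 0) (hB : ‖B‖ ^ 2 ≠ u ^ 2)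
    (h1 : (I * (τ : ℂ) * B / (u : ℂ)) * ξ + I * (τ : ℂ) * starRingEnd ℂ ξ +
      κ * ((‖ξ‖ ^ 2 : ℝ) : ℂ) = 0)
    (h2 : (I * (σ : ℂ) * B / (u : ℂ)) * ξ + I * (σ : ℂ) * starRingEnd ℂ ξ + κ = 0) :
    (starRingEnd ℂ κ + κ * starRingEnd ℂ B / (u : ℂ)) *
      (κ + starRingEnd ℂ κ * B / (u : ℂ)) =
    ((τ : ℂ) * (σ : ℂ)) * (1 - ((‖B‖ ^ 2 : ℝ) : ℂ) / ((u : ℂ) ^ 2)) ^ 2 := by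
  have hmB : B * starRingEnd ℂ B = ((‖B‖ ^ 2 : ℝ) : ℂ) := by
    rw [Complex.mul_conj]; push_cast [Complex.normSq_eq_norm_sq]; ring
  have hmξ : ξ * starRingEnd ℂ ξ = ((‖ξ‖ ^ 2 : ℝ) : ℂ) := by
    rw [Complex.mul_conj]; push_cast [Complex.normSq_eq_norm_sq]; ring
  have h3 : κ * (((‖ξ‖ ^ 2 : ℝ) : ℂ) * σ) = κ * τ := by
    linear_combination (σ : ℂ) * h1 - (τ : ℂ) * h2
  have hξτ : ((‖ξ‖ ^ 2 : ℝ) : ℂ) * σ = τ := mul_left_cancel₀ hκ h3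
  have hk : κ = -(I * (σ : ℂ) * B / (u : ℂ) * ξ + I * (σ : ℂ) * starRingEnd ℂ ξ) := by
    linear_combination h2
  have hk' : starRingEnd ℂ κ =
      I * (σ : ℂ) * starRingEnd ℂ B / (u : ℂ) * starRingEnd ℂ ξ + I * (σ : ℂ) * ξ := by
    have := congrArg (starRingEnd ℂ) hk
    simp only [map_add, map_mul, map_div₀, map_neg, Complex.conj_I, Complex.conj_ofReal,
      Complex.conj_conj] at this
    linear_combination this
  set s : ℂ := (σ : ℂ)
  set b := B
  set b' := starRingEnd ℂ B
  set x := ξ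
  set x' := starRingEnd ℂ ξ
  set a : ℂ := ((‖ξ‖ ^ 2 : ℝ) : ℂ)
  set M : ℂ := ((‖B‖ ^ 2 : ℝ) : ℂ)
  set v : ℂ := (u : ℂ)
  set K : ℂ := -(I * s * b / v * x + I * s * x') with hK
  set K' : ℂ := I * s * b' / v * x' + I * s * x with hK'
  linear_combination
    (b' / v * (κ + starRingEnd ℂ κ * b / v) + (K' + K * b' / v)) * hk
    + ((κ + starRingEnd ℂ κ * b / v) + b / v * (K' + K * b' / v)) * hk'
    + s ^ 2 * (b * b' / v ^ 2 - 1) ^ 2 * hmξ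
    + (s ^ 2 * a / v ^ 2) * (b * b' / v ^ 2 + M / v ^ 2 - 2) * hmB
    + s * (M / v ^ 2 - 1) ^ 2 * hξτ
    + (-(s ^ 2 * x' * x * (b * b' / v ^ 2 - 1) ^ 2)) * Complex.I_sq
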